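/- Let a, b, k be positive integers with b > 1 and k odd. Define S(a,b) := Σ_{m,n ≥ 0, 2bn + 2m = ab − a} (−1)^n · binom(a, n) · binom(a−1+m, m) + 2 · Σ_{m,n ≥ 0, r ≥ 1, 2bn + 2m + rk = ab − a} (−1)^n · binom(a, n) · binom(a−1+m, m). Then Σ_{0 < n < k/2} sin^a(2πbn/k) / sin^a(2πn/k) = −b^a/2 + (k/2) · S(a,b). -/

import Mathlib

/-- `S(a,b)` of the paper (depending also on `k`): the sum over `m,n ≥ 0` with
`2bn + 2m = ab - a` of `(-1)^n binom(a,n) binom(a-1+m,m)`, plus twice the sum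
over `m,n ≥ 0`, `r ≥ 1` with `2bn + 2m + rk = ab - a` of the same summand. -/
noncomputable def Sab (k a b : ℕ) : ℝ :=
  (∑ t ∈ (Finset.range (a * b + 1) ×ˢ Finset.range (a * b + 1)).filter
      (fun t => 2 * b * t.2 + 2 * t.1 = a * b - a),
    (-1 : ℝ) ^ t.2 * (a.choose t.2) * ((a - 1 + t.1).choose t.1)) +
  2 * ∑ t ∈ (Finset.range (a * b + 1) ×ˢ Finset.range (a * b + 1) ×ˢ
      Finset.Icc 1 (a * b)).filter
      (fun t => 2 * b * t.2.1 + 2 * t.1 + t.2.2 * k = a * b - a),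
    (-1 : ℝ) ^ t.2.1 * (a.choose t.2.1) * ((a - 1 + t.1).choose t.1)


open Finset Polynomial


lemma tele (w : ℂ) (hw : w ≠ 0) (b : ℕ) :
    (w - w⁻¹) * ∑ j ∈ Finset.range b, w ^ ((b:ℤ) - 1 - 2*j) = w^(b:ℤ) - w^(-(b:ℤ)) := by
  induction b with
  | zero => simp
  | succ b ih =>
    have key : ∀ m : ℤ, w * w ^ m = w ^ (m+1) := fun m => by
      rw [zpow_add₀ hw, zpow_one]; ring
    have key2 : w⁻¹ * w ^ (-(b:ℤ)) = w ^ (-((b:ℤ)+1)) := by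
      rw [← zpow_neg_one, ← zpow_add₀ hw]; ring_nf
    have h1 : ∀ j ∈ Finset.range b, w ^ (((b:ℤ)+1) - 1 - 2*j) = w * w ^ ((b:ℤ) - 1 - 2*j) := by
      intro j hj
      rw [key]; ring_nf
    rw [Finset.sum_range_succ]
    push_cast
    rw [Finset.sum_congr rfl h1, ← Finset.mul_sum]
    have h2 : ((b:ℤ)+1) - 1 - 2*b = -b := by ring
    rw [h2]
    linear_combination w * ih + key (b:ℤ) - key2

lemma sin_mul_expand (x : ℝ) (b : ℕ) :
    Complex.sin (b * x) = Complex.sin x * ∑ j ∈ Finset.range b,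
      Complex.exp (x * Complex.I) ^ ((b:ℤ) - 1 - 2*j) := by
  set w := Complex.exp ((x:ℂ) * Complex.I) with hwdef
  have hw : w ≠ 0 := Complex.exp_ne_zero _
  have hsin : ∀ y : ℂ, Complex.sin y = (Complex.exp (-y * Complex.I) - Complex.exp (y * Complex.I)) * Complex.I / 2 := fun y => rfl
  have e1 : Complex.exp (-(x:ℂ) * Complex.I) = w⁻¹ := by
    rw [← Complex.exp_neg]; ring_nf
  have e2 : Complex.exp ((b:ℂ) * x * Complex.I) = w ^ (b:ℤ) := by
    rw [zpow_natCast, ← Complex.exp_nat_mul]; ring_nf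
  have e3 : Complex.exp (-((b:ℂ) * x) * Complex.I) = w ^ (-(b:ℤ)) := by
    rw [zpow_neg, ← e2, ← Complex.exp_neg]; ring_nf
  rw [hsin, hsin, e1, e2, e3]
  have := tele w hw b
  linear_combination (Complex.I/2) * this

lemma rootsum (k : ℕ) (hk : 0 < k) (t : ℤ) :
    ∑ n ∈ Finset.range k, (Complex.exp (2*Real.pi*Complex.I/k)) ^ ((n:ℤ) * t)
      = if (k:ℤ) ∣ t then (k:ℂ) else 0 := by
  set ζ := Complex.exp (2*Real.pi*Complex.I/k) with hζ
  have hprim : IsPrimitiveRoot ζ k := Complex.isPrimitiveRoot_exp k hk.ne'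
  have hsum : ∀ n : ℕ, ζ ^ ((n:ℤ) * t) = (ζ ^ t) ^ n := by
    intro n
    rw [mul_comm, zpow_mul, zpow_natCast]
  rw [Finset.sum_congr rfl (fun n _ => hsum n)]
  by_cases h : (k:ℤ) ∣ t
  · rw [if_pos h, (hprim.zpow_eq_one_iff_dvd t).2 h]
    simp
  · rw [if_neg h]
    have hne : ζ ^ t ≠ 1 := fun he => h ((hprim.zpow_eq_one_iff_dvd t).1 he)
    have hzk : (ζ ^ t) ^ k = 1 := by
      rw [← zpow_natCast, ← zpow_mul, mul_comm, zpow_mul, zpow_natCast, hprim.pow_eq_one]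
      simp
    rw [geom_sum_eq hne, hzk]
    simp


noncomputable def gpoly (b : ℕ) : ℂ[X] := ∑ j ∈ Finset.range b, (X:ℂ[X])^j

lemma gpoly_coeff (b i : ℕ) : (gpoly b).coeff i = if i < b then 1 else 0 := by
  unfold gpoly
  rw [finset_sum_coeff]
  simp only [coeff_X_pow]
  rw [Finset.sum_ite_eq (Finset.range b) i (fun _ => (1:ℂ))]
  simp [Finset.mem_range]

lemma gpoly_natDegree_le (b : ℕ) : (gpoly b).natDegree ≤ b - 1 := by
  apply natDegree_sum_le_of_forall_le
  intro i hi
  rw [natDegree_X_pow]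
  rw [Finset.mem_range] at hi
  omega

lemma reflect_gpoly (b : ℕ) (hb : 0 < b) : reflect (b-1) (gpoly b) = gpoly b := by
  ext i
  rw [coeff_reflect, gpoly_coeff, gpoly_coeff]
  by_cases h : i ≤ b - 1
  · have h1 : b - 1 - i < b := by omega
    have h2 : i < b := by omega
    rw [revAt_le h]
    simp [h1, h2]
  · rw [revAt_eq_self_of_lt (by omega)]

lemma reflect_gpow (b : ℕ) (hb : 0 < b) : ∀ m : ℕ,
    reflect (m * (b-1)) ((gpoly b) ^ m) = (gpoly b) ^ m := by
  intro m
  induction m with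
  | zero => simp
  | succ m ih =>
    have h1 : ((gpoly b)^m).natDegree ≤ m * (b-1) :=
      le_trans (natDegree_pow_le) (Nat.mul_le_mul_left m (gpoly_natDegree_le b))
    have h2 : (gpoly b).natDegree ≤ b - 1 := gpoly_natDegree_le b
    have : (m+1) * (b-1) = m*(b-1) + (b-1) := by ring
    rw [pow_succ, this, reflect_mul _ _ h1 h2, ih, reflect_gpoly b hb]

lemma coeff_symm (a b : ℕ) (hb : 0 < b) (c : ℕ) (hc : c ≤ a * (b-1)) :
    ((gpoly b)^a).coeff c = ((gpoly b)^a).coeff (a*(b-1) - c) := by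
  conv_lhs => rw [← reflect_gpow b hb a]
  rw [coeff_reflect, revAt_le hc]

lemma eval_gpow (a b : ℕ) (y : ℂ) :
    (∑ j ∈ Finset.range b, y^j)^a
      = ∑ c ∈ Finset.range (a*(b-1)+1), ((gpoly b)^a).coeff c * y^c := by
  have h1 : (∑ j ∈ Finset.range b, y^j) = (gpoly b).eval y := by
    unfold gpoly
    rw [eval_finset_sum]
    simp
  have h2 : ((gpoly b)^a).natDegree < a*(b-1)+1 :=
    Nat.lt_succ_of_le (le_trans natDegree_pow_le (Nat.mul_le_mul_left a (gpoly_natDegree_le b)))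
  rw [h1, ← eval_pow, eval_eq_sum_range' h2]


lemma one_sub_pow_expand (a b : ℕ) :
    (1 - (PowerSeries.X : PowerSeries ℂ)^b)^a
      = ∑ n ∈ Finset.range (a+1),
          PowerSeries.C (R := ℂ) ((-1)^n * (a.choose n)) * (PowerSeries.X)^(b*n) := by
  rw [sub_eq_add_neg, add_comm, add_pow]
  refine Finset.sum_congr rfl fun n hn => ?_
  have hC : (PowerSeries.C) ((-1:ℂ)^n * (a.choose n))
      = (-1 : PowerSeries ℂ)^n * ((a.choose n : ℕ) : PowerSeries ℂ) := by
    rw [map_mul, map_pow, map_neg, map_one, map_natCast]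
  rw [hC, one_pow, mul_one, neg_pow, pow_mul]
  ring

lemma coeff_one_sub_pow (a b : ℕ) (u : ℕ) :
    (PowerSeries.coeff u) ((1 - (PowerSeries.X : PowerSeries ℂ)^b)^a)
      = ∑ n ∈ Finset.range (a+1), (if u = b*n then ((-1:ℂ)^n * (a.choose n)) else 0) := by
  rw [one_sub_pow_expand, map_sum]
  apply Finset.sum_congr rfl
  intro n hn
  rw [PowerSeries.coeff_C_mul, PowerSeries.coeff_X_pow]
  split <;> simp_all

lemma coe_gpow_eq (a b : ℕ) (ha : 0 < a) :
    (((gpoly b)^a : ℂ[X]) : PowerSeries ℂ)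
      = (1 - (PowerSeries.X : PowerSeries ℂ)^b)^a * (PowerSeries.invOneSubPow ℂ a).val := by
  have hpoly : (gpoly b) * (1 - (X:ℂ[X])) = 1 - (X:ℂ[X])^b := by
    have := geom_sum_mul (X:ℂ[X]) b
    unfold gpoly
    linear_combination -this
  have hps : ((gpoly b : ℂ[X]) : PowerSeries ℂ) * (1 - PowerSeries.X)
      = 1 - (PowerSeries.X : PowerSeries ℂ)^b := by
    have := congrArg (fun p : ℂ[X] => (p : PowerSeries ℂ)) hpoly
    simpa [Polynomial.coe_mul, Polynomial.coe_sub, Polynomial.coe_one, Polynomial.coe_pow,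
      Polynomial.coe_X] using this
  have hpow : ((gpoly b : ℂ[X]) : PowerSeries ℂ)^a * (1 - PowerSeries.X)^a
      = (1 - (PowerSeries.X : PowerSeries ℂ)^b)^a := by
    rw [← mul_pow, hps]
  have hinv : (PowerSeries.invOneSubPow ℂ a).inv = (1 - PowerSeries.X)^a :=
    PowerSeries.invOneSubPow_inv_eq_one_sub_pow ℂ a
  calc (((gpoly b)^a : ℂ[X]) : PowerSeries ℂ)
      = ((gpoly b : ℂ[X]) : PowerSeries ℂ)^a := by rw [Polynomial.coe_pow]
    _ = ((gpoly b : ℂ[X]) : PowerSeries ℂ)^a * ((PowerSeries.invOneSubPow ℂ a).inv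
          * (PowerSeries.invOneSubPow ℂ a).val) := by
        rw [Units.inv_val, mul_one]
    _ = (((gpoly b : ℂ[X]) : PowerSeries ℂ)^a * (1 - PowerSeries.X)^a)
          * (PowerSeries.invOneSubPow ℂ a).val := by
        rw [hinv]; ring
    _ = (1 - (PowerSeries.X : PowerSeries ℂ)^b)^a * (PowerSeries.invOneSubPow ℂ a).val := by
      rw [hpow]

lemma coeff_formula (a b : ℕ) (ha : 0 < a) (c : ℕ) :
    ((gpoly b)^a).coeff c
      = ∑ n ∈ Finset.range (a+1),
          (if b*n ≤ c then ((-1:ℂ)^n * (a.choose n) * (((a-1)+(c-b*n)).choose (a-1)) : ℂ) else 0) := by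
  have h0 : ((gpoly b)^a).coeff c
      = (PowerSeries.coeff c) (((gpoly b)^a : ℂ[X]) : PowerSeries ℂ) := by
    rw [Polynomial.coeff_coe]
  rw [h0, coe_gpow_eq a b ha, PowerSeries.coeff_mul,
    PowerSeries.invOneSubPow_val_eq_mk_sub_one_add_choose_of_pos ℂ a ha]
  rw [Finset.Nat.sum_antidiagonal_eq_sum_range_succ_mk]
  simp only [coeff_one_sub_pow, PowerSeries.coeff_mk, Finset.sum_mul]
  rw [Finset.sum_comm]
  apply Finset.sum_congr rfl
  intro n hn
  simp only [ite_mul, zero_mul]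
  rw [Finset.sum_ite_eq' (Finset.range (c+1)) (b*n)]
  by_cases h : b*n ≤ c
  · rw [if_pos (Finset.mem_range.2 (by omega)), if_pos h]
  · rw [if_neg (by simp only [Finset.mem_range]; omega), if_neg h]


lemma nat_dvd_of_int (k x : ℕ) (h : (k:ℤ) ∣ -(x:ℤ)) : k ∣ x := by
  rw [dvd_neg] at h
  exact_mod_cast h

lemma fold (a b k : ℕ) (hk : 0 < k) (d : ℕ) (hd : 0 < d) (hdab : d ≤ a*b)
    (N : ℕ → ℂ) (hsymm : ∀ c ≤ d, N c = N (d - c)) :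
    ∑ c ∈ (Finset.range (d+1)).filter (fun c : ℕ => (k:ℤ) ∣ 2*(c:ℤ) - (d:ℤ)), N c
      = (if 2 ∣ d then N (d/2) else 0)
        + 2 * ∑ r ∈ (Finset.Icc 1 (a*b)).filter (fun r => r*k ≤ d ∧ 2 ∣ (d - r*k)),
            N ((d - r*k)/2) := by
  set C := (Finset.range (d+1)).filter (fun c : ℕ => (k:ℤ) ∣ 2*(c:ℤ) - (d:ℤ)) with hC
  have hmemC : ∀ c : ℕ, c ∈ C ↔ (c ≤ d ∧ (k:ℤ) ∣ 2*(c:ℤ) - (d:ℤ)) := by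
    intro c
    simp [hC, Finset.mem_filter, Finset.mem_range, Nat.lt_succ_iff]
  have hsplit : ∑ c ∈ C, N c
      = ∑ c ∈ C.filter (fun c => 2*c = d), N c
        + (∑ c ∈ C.filter (fun c => 2*c < d), N c
          + ∑ c ∈ C.filter (fun c => d < 2*c), N c) := by
    have e1 : (C.filter (fun c => ¬ 2*c = d)).filter (fun c => 2*c < d)
        = C.filter (fun c => 2*c < d) := by
      ext c
      simp only [Finset.mem_filter]
      constructor
      · rintro ⟨⟨h1, h2⟩, h3⟩; exact ⟨h1, h3⟩
      · rintro ⟨h1, h3⟩; exact ⟨⟨h1, by omega⟩, h3⟩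
    have e2 : (C.filter (fun c => ¬ 2*c = d)).filter (fun c => ¬ 2*c < d)
        = C.filter (fun c => d < 2*c) := by
      ext c
      simp only [Finset.mem_filter]
      constructor
      · rintro ⟨⟨h1, h2⟩, h3⟩; exact ⟨h1, by omega⟩
      · rintro ⟨h1, h3⟩; exact ⟨⟨h1, by omega⟩, by omega⟩
    rw [← Finset.sum_filter_add_sum_filter_not C (fun c => 2*c = d)]
    congr 1
    rw [← Finset.sum_filter_add_sum_filter_not (C.filter (fun c => ¬ 2*c = d))
      (fun c => 2*c < d), e1, e2]
  have hmid : ∑ c ∈ C.filter (fun c => 2*c = d), N c = if 2 ∣ d then N (d/2) else 0 := by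
    by_cases h2 : 2 ∣ d
    · rw [if_pos h2]
      have he : C.filter (fun c => 2*c = d) = {d/2} := by
        ext c
        simp only [Finset.mem_filter, Finset.mem_singleton, hmemC c]
        constructor
        · rintro ⟨_, h⟩; omega
        · intro h
          refine ⟨⟨by omega, ?_⟩, by omega⟩
          have : 2*(c:ℤ) - (d:ℤ) = 0 := by omega
          rw [this]; exact dvd_zero _
      rw [he, Finset.sum_singleton]
    · rw [if_neg h2]
      have he : C.filter (fun c => 2*c = d) = ∅ := by
        ext c
        simp only [Finset.mem_filter, Finset.notMem_empty, iff_false, not_and]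
        intro _
        omega
      rw [he, Finset.sum_empty]
  have hupper : ∑ c ∈ C.filter (fun c => d < 2*c), N c
      = ∑ c ∈ C.filter (fun c => 2*c < d), N c := by
    apply Finset.sum_nbij' (fun c => d - c) (fun c => d - c)
    · intro c hc
      rw [Finset.mem_filter, hmemC] at hc
      obtain ⟨⟨h1, h2⟩, h3⟩ := hc
      rw [Finset.mem_filter, hmemC]
      refine ⟨⟨by omega, ?_⟩, by omega⟩
      have h4 : 2*((d - c : ℕ):ℤ) - (d:ℤ) = -(2*(c:ℤ) - (d:ℤ)) := by omega
      rw [h4]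
      exact dvd_neg.2 h2
    · intro c hc
      rw [Finset.mem_filter, hmemC] at hc
      obtain ⟨⟨h1, h2⟩, h3⟩ := hc
      rw [Finset.mem_filter, hmemC]
      refine ⟨⟨by omega, ?_⟩, by omega⟩
      have h4 : 2*((d - c : ℕ):ℤ) - (d:ℤ) = -(2*(c:ℤ) - (d:ℤ)) := by omega
      rw [h4]
      exact dvd_neg.2 h2
    · intro c hc
      rw [Finset.mem_filter, hmemC] at hc
      omega
    · intro c hc
      rw [Finset.mem_filter, hmemC] at hc
      omega
    · intro c hc
      rw [Finset.mem_filter, hmemC] at hc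
      exact hsymm c (by omega)
  have hlow : ∑ c ∈ C.filter (fun c => 2*c < d), N c
      = ∑ r ∈ (Finset.Icc 1 (a*b)).filter (fun r => r*k ≤ d ∧ 2 ∣ (d - r*k)),
          N ((d - r*k)/2) := by
    have hdvdlem : ∀ c : ℕ, c ∈ C.filter (fun c => 2*c < d) →
        k ∣ d - 2*c ∧ (d - 2*c)/k * k = d - 2*c ∧ 1 ≤ (d-2*c)/k ∧ (d-2*c)/k ≤ a*b := by
      intro c hc
      rw [Finset.mem_filter, hmemC] at hc
      obtain ⟨⟨h1, h2⟩, h3⟩ := hc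
      have hdvd : k ∣ d - 2*c := by
        apply nat_dvd_of_int
        have h4 : -((d - 2*c : ℕ):ℤ) = 2*(c:ℤ) - (d:ℤ) := by omega
        rw [h4]; exact h2
      have heq : (d - 2*c)/k * k = d - 2*c := Nat.div_mul_cancel hdvd
      have hr1 : 1 ≤ (d - 2*c)/k := by
        rw [Nat.one_le_div_iff hk]
        exact Nat.le_of_dvd (by omega) hdvd
      have hrk : (d - 2*c)/k ≤ (d - 2*c)/k * k := Nat.le_mul_of_pos_right _ hk
      exact ⟨hdvd, heq, hr1, by omega⟩
    apply Finset.sum_nbij' (fun c => (d - 2*c)/k) (fun r => (d - r*k)/2)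
    · intro c hc
      obtain ⟨hdvd, heq, hr1, hrab⟩ := hdvdlem c hc
      rw [Finset.mem_filter, hmemC] at hc
      rw [Finset.mem_filter, Finset.mem_Icc]
      exact ⟨⟨hr1, hrab⟩, by omega, by omega⟩
    · intro r hr
      rw [Finset.mem_filter, Finset.mem_Icc] at hr
      obtain ⟨⟨hr1, hr2⟩, hrk, hev⟩ := hr
      rw [Finset.mem_filter, hmemC]
      have heq : (d - r*k)/2 * 2 = d - r*k := Nat.div_mul_cancel hev
      have hrk1 : 1 ≤ r*k := Nat.one_le_iff_ne_zero.2 (by positivity)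
      refine ⟨⟨by omega, ?_⟩, by omega⟩
      have h5 : 2*(((d - r*k)/2 : ℕ) : ℤ) - (d:ℤ) = -((r:ℤ)*(k:ℤ)) := by omega
      rw [h5]
      exact dvd_neg.2 ⟨(r:ℤ), by ring⟩
    · intro c hc
      obtain ⟨hdvd, heq, hr1, hrab⟩ := hdvdlem c hc
      rw [Finset.mem_filter, hmemC] at hc
      omega
    · intro r hr
      rw [Finset.mem_filter, Finset.mem_Icc] at hr
      obtain ⟨⟨hr1, hr2⟩, hrk, hev⟩ := hr
      have heq : (d - r*k)/2 * 2 = d - r*k := Nat.div_mul_cancel hev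
      have h6 : d - 2*((d - r*k)/2) = r*k := by omega
      rw [h6]
      exact Nat.mul_div_cancel r hk
    · intro c hc
      obtain ⟨hdvd, heq, hr1, hrab⟩ := hdvdlem c hc
      rw [Finset.mem_filter, hmemC] at hc
      congr 1
      omega
  rw [hsplit, hmid, hupper, hlow]
  ring

lemma choose_flip (p q : ℕ) : (p+q).choose q = (p+q).choose p := by
  have := Nat.choose_symm (Nat.le_add_left q p)
  rw [Nat.add_sub_cancel] at this
  exact this.symm

lemma pairsum (a b c : ℕ) (ha : 0 < a) (hb : 1 < b) (hc : c ≤ a*b - a) :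
    ∑ t ∈ (Finset.range (a*b+1) ×ˢ Finset.range (a*b+1)).filter
        (fun t => b * t.2 + t.1 = c),
      ((-1:ℂ)^t.2 * (a.choose t.2) * ((a-1+t.1).choose t.1))
    = ((gpoly b)^a).coeff c := by
  rw [coeff_formula a b ha c]
  have hsub : Finset.range (a+1) ⊆ Finset.range (a*b+1) := by
    apply Finset.range_subset_range.2
    have : a ≤ a*b := Nat.le_mul_of_pos_right a (by omega)
    omega
  rw [Finset.sum_subset hsub (by
    intro n hn hn2
    simp only [Finset.mem_range] at hn hn2
    have : a < n := by omega
    simp [Nat.choose_eq_zero_of_lt this])]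
  rw [← Finset.sum_filter]
  apply Finset.sum_nbij' (fun t : ℕ × ℕ => t.2) (fun n => (c - b*n, n))
  · intro t ht
    simp only [Finset.mem_filter, Finset.mem_product, Finset.mem_range] at ht ⊢
    omega
  · intro n hn
    simp only [Finset.mem_filter, Finset.mem_range] at hn
    simp only [Finset.mem_filter, Finset.mem_product, Finset.mem_range]
    omega
  · intro t ht
    simp only [Finset.mem_filter, Finset.mem_product, Finset.mem_range] at ht
    ext <;> simp <;> omega
  · intro n hn
    rfl
  · intro t ht
    simp only [Finset.mem_filter, Finset.mem_product, Finset.mem_range] at ht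
    have h1 : c - b * t.2 = t.1 := by omega
    rw [h1]
    have h2 : ((a-1) + t.1).choose t.1 = ((a-1) + t.1).choose (a-1) := choose_flip (a-1) t.1
    rw [h2]

lemma triple (a b k : ℕ) (ha : 0 < a) (hb : 1 < b) (hk : 0 < k) :
    ∑ t ∈ ((Finset.range (a*b+1) ×ˢ Finset.range (a*b+1) ×ˢ Finset.Icc 1 (a*b)).filter
        (fun t => 2*b*t.2.1 + 2*t.1 + t.2.2*k = a*b - a)),
      ((-1:ℂ)^t.2.1 * (a.choose t.2.1) * ((a-1+t.1).choose t.1))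
    = ∑ r ∈ (Finset.Icc 1 (a*b)).filter
        (fun r => r*k ≤ a*b - a ∧ 2 ∣ (a*b - a - r*k)),
        ((gpoly b)^a).coeff ((a*b - a - r*k)/2) := by
  rw [Finset.sum_filter, Finset.sum_filter, Finset.sum_product]
  have step1 : ∀ m ∈ Finset.range (a*b+1),
      (∑ y ∈ Finset.range (a*b+1) ×ˢ Finset.Icc 1 (a*b),
        if 2*b*y.1 + 2*m + y.2*k = a*b - a then
          ((-1:ℂ)^y.1 * (a.choose y.1) * ((a-1+m).choose m)) else 0)
      = ∑ n ∈ Finset.range (a*b+1), ∑ r ∈ Finset.Icc 1 (a*b),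
          if 2*b*n + 2*m + r*k = a*b - a then
            ((-1:ℂ)^n * (a.choose n) * ((a-1+m).choose m)) else 0 := by
    intro m _
    rw [Finset.sum_product]
  rw [Finset.sum_congr rfl step1, Finset.sum_comm]
  have step2 : ∀ n ∈ Finset.range (a*b+1),
      (∑ m ∈ Finset.range (a*b+1), ∑ r ∈ Finset.Icc 1 (a*b),
        if 2*b*n + 2*m + r*k = a*b - a then
          ((-1:ℂ)^n * (a.choose n) * ((a-1+m).choose m)) else 0)
      = ∑ r ∈ Finset.Icc 1 (a*b), ∑ m ∈ Finset.range (a*b+1),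
          if 2*b*n + 2*m + r*k = a*b - a then
            ((-1:ℂ)^n * (a.choose n) * ((a-1+m).choose m)) else 0 := by
    intro n _
    rw [Finset.sum_comm]
  rw [Finset.sum_congr rfl step2, Finset.sum_comm]
  apply Finset.sum_congr rfl
  intro r hr
  rw [Finset.mem_Icc] at hr
  by_cases hcond : r*k ≤ a*b - a ∧ 2 ∣ (a*b - a - r*k)
  · rw [if_pos hcond]
    obtain ⟨hrk, hev⟩ := hcond
    have heq2 : (a*b - a - r*k)/2 * 2 = a*b - a - r*k := Nat.div_mul_cancel hev
    rw [← pairsum a b ((a*b - a - r*k)/2) ha hb (by omega)]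
    rw [Finset.sum_filter, Finset.sum_product]
    conv_rhs => rw [Finset.sum_comm]
    dsimp only
    apply Finset.sum_congr rfl
    intro n _
    apply Finset.sum_congr rfl
    intro m _
    refine if_congr ?_ rfl rfl
    have hh : 2*b*n = 2*(b*n) := by ring
    rw [hh]
    constructor <;> intro h <;> omega
  · rw [if_neg hcond]
    apply Finset.sum_eq_zero
    intro n _
    apply Finset.sum_eq_zero
    intro m _
    rw [if_neg]
    intro h
    have hh : 2*b*n = 2*(b*n) := by ring
    rw [hh] at h
    apply hcond
    constructor <;> omega

noncomputable def zt (k : ℕ) : ℂ := Complex.exp (2*Real.pi*Complex.I/k)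

noncomputable def En (k b n : ℕ) : ℂ :=
  ∑ j ∈ Finset.range b, (zt k) ^ ((n:ℤ) * ((b:ℤ) - 1 - 2*(j:ℤ)))

lemma zt_ne_zero (k : ℕ) : zt k ≠ 0 := Complex.exp_ne_zero _

lemma rootsum' (k : ℕ) (hk : 0 < k) (t : ℤ) :
    ∑ n ∈ Finset.range k, (zt k) ^ ((n:ℤ) * t)
      = if (k:ℤ) ∣ t then (k:ℂ) else 0 := rootsum k hk t

lemma ratio_eq (a b k : ℕ) (hk : 0 < k) (n : ℕ)
    (hsin : Real.sin (2*Real.pi*n/k) ≠ 0) :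
    ((Real.sin (2*Real.pi*b*n/k) ^ a / Real.sin (2*Real.pi*n/k) ^ a : ℝ) : ℂ)
      = (En k b n)^a := by
  set x : ℝ := 2*Real.pi*n/k with hx
  have hb2 : (2*Real.pi*b*n/k : ℝ) = b * x := by rw [hx]; ring
  have hexp : Complex.exp ((x:ℂ) * Complex.I) = (zt k) ^ n := by
    rw [zt, ← Complex.exp_nat_mul]
    congr 1
    push_cast [hx]
    ring
  have hEn : ∀ j ∈ Finset.range b,
      Complex.exp ((x:ℂ)*Complex.I) ^ ((b:ℤ) - 1 - 2*(j:ℤ))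
        = (zt k) ^ ((n:ℤ) * ((b:ℤ) - 1 - 2*(j:ℤ))) := by
    intro j _
    rw [hexp, ← zpow_natCast (zt k) n, ← zpow_mul]
  have hsinmul := sin_mul_expand x b
  rw [Finset.sum_congr rfl hEn] at hsinmul
  have hsz : Complex.sin (x:ℂ) ≠ 0 := by
    rw [← Complex.ofReal_sin]
    exact Complex.ofReal_ne_zero.2 hsin
  rw [hb2, Complex.ofReal_div, Complex.ofReal_pow, Complex.ofReal_pow,
    Complex.ofReal_sin, Complex.ofReal_sin, Complex.ofReal_mul, Complex.ofReal_natCast]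
  rw [hsinmul, En, mul_pow]
  rw [mul_div_cancel_left₀ _ (pow_ne_zero a hsz)]

lemma En_neg (k b : ℕ) (hb : 0 < b) (n : ℤ) :
    ∑ j ∈ Finset.range b, (zt k) ^ (-n * ((b:ℤ) - 1 - 2*(j:ℤ)))
      = ∑ j ∈ Finset.range b, (zt k) ^ (n * ((b:ℤ) - 1 - 2*(j:ℤ))) := by
  apply Finset.sum_nbij' (fun j => b-1-j) (fun j => b-1-j)
  · intro j hj; simp only [Finset.mem_range] at hj ⊢; omega
  · intro j hj; simp only [Finset.mem_range] at hj ⊢; omega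
  · intro j hj; simp only [Finset.mem_range] at hj; omega
  · intro j hj; simp only [Finset.mem_range] at hj; omega
  · intro j hj
    simp only [Finset.mem_range] at hj
    congr 1
    have hcast : ((b-1-j:ℕ):ℤ) = (b:ℤ)-1-(j:ℤ) := by omega
    rw [hcast]
    ring

lemma zt_pow_k (k : ℕ) (hk : 0 < k) : (zt k) ^ ((k:ℕ):ℤ) = 1 := by
  rw [zpow_natCast]
  exact (Complex.isPrimitiveRoot_exp k hk.ne').pow_eq_one

lemma En_symm (k b : ℕ) (hk : 0 < k) (hb : 0 < b) (n : ℕ) (hn : n ≤ k) :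
    En k b (k - n) = En k b n := by
  rw [En, En, ← En_neg k b hb (n:ℤ)]
  apply Finset.sum_congr rfl
  intro j hj
  have hcast : ((k-n:ℕ):ℤ) = (k:ℤ) - (n:ℤ) := by omega
  rw [hcast]
  have hsplit : ((k:ℤ) - (n:ℤ)) * ((b:ℤ)-1-2*(j:ℤ))
      = (k:ℤ) * ((b:ℤ)-1-2*(j:ℤ)) + (-(n:ℤ))*((b:ℤ)-1-2*(j:ℤ)) := by ring
  rw [hsplit, zpow_add₀ (zt_ne_zero k), zpow_mul, zt_pow_k k hk, one_zpow, one_mul]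

lemma expand_pow (a b k : ℕ) (ha : 0 < a) (hb : 1 < b) (hk : 0 < k) (n : ℕ) :
    (En k b n)^a = ∑ c ∈ Finset.range (a*(b-1)+1),
      ((gpoly b)^a).coeff c * (zt k) ^ ((n:ℤ) * (2*(c:ℤ) - ((a*(b-1):ℕ):ℤ))) := by
  have hz := zt_ne_zero k
  have h1 : En k b n = (zt k)^(-(n:ℤ)*((b:ℤ)-1)) * ∑ j ∈ Finset.range b,
      ((zt k)^(2*(n:ℤ)))^j := by
    rw [En, ← En_neg k b (by omega) (n:ℤ), Finset.mul_sum]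
    apply Finset.sum_congr rfl
    intro j hj
    rw [← zpow_natCast ((zt k)^(2*(n:ℤ))) j, ← zpow_mul, ← zpow_add₀ hz]
    congr 1
    ring
  rw [h1, mul_pow, ← zpow_natCast ((zt k)^(-(n:ℤ)*((b:ℤ)-1))) a, ← zpow_mul,
    eval_gpow a b ((zt k)^(2*(n:ℤ))), Finset.mul_sum]
  apply Finset.sum_congr rfl
  intro c hc
  rw [← zpow_natCast ((zt k)^(2*(n:ℤ))) c, ← zpow_mul, mul_left_comm, ← zpow_add₀ hz]
  congr 2
  push_cast [Nat.cast_sub (by omega : 1 ≤ b)]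
  ring

lemma sum_range_k (a b k : ℕ) (ha : 0 < a) (hb : 1 < b) (hk : 0 < k) :
    ∑ n ∈ Finset.range k, (En k b n)^a
      = (k:ℂ) * ∑ c ∈ (Finset.range (a*(b-1)+1)).filter
          (fun c : ℕ => (k:ℤ) ∣ 2*(c:ℤ) - ((a*(b-1):ℕ):ℤ)),
          ((gpoly b)^a).coeff c := by
  rw [Finset.sum_congr rfl (fun n _ => expand_pow a b k ha hb hk n), Finset.sum_comm]
  have hper : ∀ c ∈ Finset.range (a*(b-1)+1),
      ∑ n ∈ Finset.range k, ((gpoly b)^a).coeff c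
          * (zt k) ^ ((n:ℤ) * (2*(c:ℤ) - ((a*(b-1):ℕ):ℤ)))
      = if (k:ℤ) ∣ 2*(c:ℤ) - ((a*(b-1):ℕ):ℤ)
          then ((gpoly b)^a).coeff c * k else 0 := by
    intro c _
    rw [← Finset.mul_sum, rootsum' k hk (2*(c:ℤ) - ((a*(b-1):ℕ):ℤ))]
    split
    · rfl
    · rw [mul_zero]
  rw [Finset.sum_congr rfl hper, ← Finset.sum_filter, Finset.mul_sum]
  apply Finset.sum_congr rfl
  intro c _
  ring

lemma sin_ne (k : ℕ) (hk : 0 < k) (hkodd : Odd k) (n : ℕ) (h1 : 1 ≤ n) (h2 : n ≤ k-1) :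
    Real.sin (2*Real.pi*n/k) ≠ 0 := by
  rw [Real.sin_ne_zero_iff]
  intro m hm
  have hk0 : (k:ℝ) ≠ 0 := Nat.cast_ne_zero.2 hk.ne'
  have hmk : (m:ℝ) * k = 2*n := by
    field_simp at hm
    nlinarith [Real.pi_ne_zero, Real.pi_pos, hm]
  have hmkZ : m * (k:ℤ) = 2*(n:ℤ) := by exact_mod_cast hmk
  obtain ⟨t, ht⟩ := hkodd
  rcases le_or_gt m 0 with hm0 | hm0
  · have := mul_le_mul_of_nonneg_right hm0 (by positivity : (0:ℤ) ≤ k)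
    simp only [zero_mul] at this
    omega
  · rcases eq_or_lt_of_le (show (0:ℤ)+1 ≤ m from hm0) with hm1 | hm1
    · have hm' : m = 1 := by omega
      rw [hm', one_mul] at hmkZ
      omega
    · have h2m : (2:ℤ) ≤ m := hm1
      have := mul_le_mul_of_nonneg_right h2m (by positivity : (0:ℤ) ≤ k)
      omega

lemma range_split (a b k : ℕ) (hk : 0 < k) (hb : 0 < b) (hkodd : Odd k) :
    ∑ n ∈ Finset.range k, (En k b n)^a
      = (b:ℂ)^a + 2 * ∑ n ∈ Finset.Icc 1 ((k-1)/2), (En k b n)^a := by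
  obtain ⟨t, ht⟩ := hkodd
  have hins : Finset.range k = insert 0 (Finset.Icc 1 (k-1)) := by
    ext m
    simp only [Finset.mem_range, Finset.mem_insert, Finset.mem_Icc]
    omega
  have hE0 : En k b 0 = (b:ℂ) := by
    rw [En]
    have : ∀ j ∈ Finset.range b, (zt k) ^ (((0:ℕ):ℤ) * ((b:ℤ) - 1 - 2*(j:ℤ))) = 1 := by
      intro j _
      rw [Nat.cast_zero, zero_mul, zpow_zero]
    rw [Finset.sum_congr rfl this, Finset.sum_const, Finset.card_range]
    simp
  rw [hins, Finset.sum_insert (by simp)]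
  rw [hE0]
  congr 1
  have hsplit : Finset.Icc 1 (k-1) = Finset.Icc 1 ((k-1)/2) ∪ Finset.Ioc ((k-1)/2) (k-1) := by
    ext m
    simp only [Finset.mem_Icc, Finset.mem_union, Finset.mem_Ioc]
    omega
  have hdisj : Disjoint (Finset.Icc 1 ((k-1)/2)) (Finset.Ioc ((k-1)/2) (k-1)) := by
    rw [Finset.disjoint_left]
    intro m hm hm2
    simp only [Finset.mem_Icc] at hm
    simp only [Finset.mem_Ioc] at hm2
    omega
  rw [hsplit, Finset.sum_union hdisj]
  have hsec : ∑ n ∈ Finset.Ioc ((k-1)/2) (k-1), (En k b n)^a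
      = ∑ n ∈ Finset.Icc 1 ((k-1)/2), (En k b n)^a := by
    apply Finset.sum_nbij' (fun n => k - n) (fun n => k - n)
    · intro n hn; simp only [Finset.mem_Ioc] at hn; simp only [Finset.mem_Icc]; omega
    · intro n hn; simp only [Finset.mem_Icc] at hn; simp only [Finset.mem_Ioc]; omega
    · intro n hn; simp only [Finset.mem_Ioc] at hn; omega
    · intro n hn; simp only [Finset.mem_Icc] at hn; omega
    · intro n hn
      simp only [Finset.mem_Ioc] at hn
      rw [En_symm k b hk hb n (by omega)]
  rw [hsec]
  ring

lemma sab_complex (a b k : ℕ) (ha : 0 < a) (hb : 1 < b) (hk : 0 < k) :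
    ((Sab k a b : ℝ) : ℂ)
      = (if 2 ∣ (a*b - a) then ((gpoly b)^a).coeff ((a*b-a)/2) else 0)
        + 2 * ∑ r ∈ (Finset.Icc 1 (a*b)).filter
            (fun r => r*k ≤ a*b - a ∧ 2 ∣ (a*b - a - r*k)),
            ((gpoly b)^a).coeff ((a*b - a - r*k)/2) := by
  rw [Sab]
  push_cast
  congr 1
  · by_cases h2 : 2 ∣ (a*b - a)
    · rw [if_pos h2]
      have heq : (a*b-a)/2*2 = a*b-a := Nat.div_mul_cancel h2
      rw [← pairsum a b ((a*b-a)/2) ha hb (by omega)]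
      apply Finset.sum_congr
      · apply Finset.filter_congr
        intro t ht
        have hh : 2*b*t.2 = 2*(b*t.2) := by ring
        rw [hh]
        constructor <;> intro h <;> omega
      · intro t _; rfl
    · rw [if_neg h2]
      apply Finset.sum_eq_zero
      intro t ht
      simp only [Finset.mem_filter] at ht
      exfalso
      have hh : 2*b*t.2 = 2*(b*t.2) := by ring
      rw [hh] at ht
      omega
  · rw [← triple a b k ha hb hk]

theorem stmt_18 (a b k : ℕ) (ha : 0 < a) (hb : 1 < b) (hk : 0 < k)
    (hkodd : Odd k) :
    ∑ n ∈ Finset.Icc 1 ((k - 1) / 2),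
        Real.sin (2 * Real.pi * b * n / k) ^ a /
          Real.sin (2 * Real.pi * n / k) ^ a
      = -(b : ℝ) ^ a / 2 + (k : ℝ) / 2 * Sab k a b := by
  have hd : a*(b-1) = a*b - a := by
    rw [Nat.mul_sub, mul_one]
  have hab : a*2 ≤ a*b := Nat.mul_le_mul_left a hb
  have hd0 : 0 < a*b - a := by omega
  apply Complex.ofReal_injective
  have hL : ((∑ n ∈ Finset.Icc 1 ((k-1)/2),
        Real.sin (2*Real.pi*b*n/k)^a / Real.sin (2*Real.pi*n/k)^a : ℝ) : ℂ)
      = ∑ n ∈ Finset.Icc 1 ((k-1)/2), (En k b n)^a := by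
    rw [Complex.ofReal_sum]
    apply Finset.sum_congr rfl
    intro n hn
    rw [Finset.mem_Icc] at hn
    exact ratio_eq a b k hk n (sin_ne k hk hkodd n (by omega) (by omega))
  have hKey := range_split a b k hk (by omega) hkodd
  rw [sum_range_k a b k ha hb hk, hd] at hKey
  have hsymmN : ∀ c ≤ a*b - a,
      ((gpoly b)^a).coeff c = ((gpoly b)^a).coeff ((a*b - a) - c) := by
    intro c hc
    have h := coeff_symm a b (by omega) c (by rw [hd]; exact hc)
    rw [hd] at h
    exact h
  have hfold := fold a b k hk (a*b - a) hd0 (by omega)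
      (fun c => ((gpoly b)^a).coeff c) hsymmN
  have hsab := sab_complex a b k ha hb hk
  rw [hL]
  push_cast
  linear_combination (-(1:ℂ)/2) * hKey + (k:ℂ)/2 * hfold - (k:ℂ)/2 * hsab
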